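/- In the algebra F(m,λ), the derived relation (α₂γ₁α₁)^{m−1} α₂γ₁α₃ = 0 holds, i.e. follows from the defining relations (F1)–(F7). -/

import Mathlib

/-!
The algebra `F(m,λ)` of Skowyrski's "Two tilts of higher spherical algebras",
realized as the quotient of the path algebra of the quiver `Q_F` by the
relations (F1)-(F7).  Vertices `1,…,6` are encoded as `0,…,5 : Fin 6`.
The path algebra is presented as the free algebra on the trivial paths
(idempotents) and the arrows, modulo the path-algebra relations
(orthogonal idempotents summing to `1`, source/target compatibility)
and the relations (F1)-(F7).  Paths compose left to right.
-/

namespace TwoTiltsF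

/-- Arrows of `Q_F`: α₁:1→2, α₃:1→6, β₁:1→5, β₃:1→4, α₂:2→3, α₄:6→3,
β₂:5→3, β₄:4→3, γ₁ γ₂:3→1. -/
inductive FArr | a1 | a2 | a3 | a4 | b1 | b2 | b3 | b4 | g1 | g2

/-- Source vertex of an arrow. -/
def FArr.src : FArr → Fin 6
  | .a1 => 0 | .a3 => 0 | .b1 => 0 | .b3 => 0
  | .a2 => 1 | .a4 => 5 | .b2 => 4 | .b4 => 3
  | .g1 => 2 | .g2 => 2

/-- Target vertex of an arrow. -/
def FArr.tgt : FArr → Fin 6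
  | .a1 => 1 | .a3 => 5 | .b1 => 4 | .b3 => 3
  | .a2 => 2 | .a4 => 2 | .b2 => 2 | .b4 => 2
  | .g1 => 0 | .g2 => 0

/-- The free algebra on trivial paths and arrows of `Q_F`. -/
abbrev FFree (K : Type*) [Field K] := FreeAlgebra K (Fin 6 ⊕ FArr)

variable {K : Type*} [Field K]

/-- Trivial path at vertex `i`. -/
def fe (i : Fin 6) : FFree K := FreeAlgebra.ι K (Sum.inl i)
/-- The arrow `a` as an element of the free algebra. -/
def fa (a : FArr) : FFree K := FreeAlgebra.ι K (Sum.inr a)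

def A1 : FFree K := fa .a1
def A2 : FFree K := fa .a2
def A3 : FFree K := fa .a3
def A4 : FFree K := fa .a4
def B1 : FFree K := fa .b1
def B2 : FFree K := fa .b2
def B3 : FFree K := fa .b3
def B4 : FFree K := fa .b4
def G1 : FFree K := fa .g1
def G2 : FFree K := fa .g2

/-- The defining relations of `F(m,λ)`: path algebra relations together
with (F1)-(F7). -/
inductive FRel (K : Type*) [Field K] (m : ℕ) (l : K) : FFree K → FFree K → Prop
  | orth (i j : Fin 6) : FRel K m l (fe i * fe j) (if i = j then fe i else 0)
  | total : FRel K m l (∑ i, fe i) 1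
  | src (a : FArr) : FRel K m l (fe a.src * fa a) (fa a)
  | tgt (a : FArr) : FRel K m l (fa a * fe a.tgt) (fa a)
  | F1a : FRel K m l (A1 * A2 - A3 * A4 + B1 * B2) 0
  | F1b : FRel K m l (A1 * A2 - A3 * A4 + B3 * B4 + l • ((A3 * A4 * G1) ^ (m - 1) * (A3 * A4))) 0
  | F2a : FRel K m l (A2 * G1) (A2 * G2)
  | F2b : FRel K m l (G2 * A1) (G1 * A1)
  | F3a : FRel K m l (A4 * G2) (A4 * G1 + l • ((A4 * G1 * A3) ^ (m - 1) * (A4 * G1)))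
  | F3b : FRel K m l (G2 * A3) (G1 * A3 + l • ((G1 * A3 * A4) ^ (m - 1) * (G1 * A3)))
  | F4a : FRel K m l (B2 * G1) 0
  | F4b : FRel K m l (B4 * G2) 0
  | F4c : FRel K m l (G1 * B1) 0
  | F4d : FRel K m l (G2 * B3) 0
  | F5a : FRel K m l (B2 * G2 * B1 * B2) 0
  | F5b : FRel K m l (B4 * G1 * B3 * B4) 0
  | F6a : FRel K m l (G1 * A1 * A2) (G1 * A3 * A4)
  | F6b : FRel K m l (A1 * A2 * G1) (A3 * A4 * G1)
  | F7a : FRel K m l ((A3 * A4 * G1) ^ m * A1) 0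
  | F7b : FRel K m l ((A3 * A4 * G1) ^ m * A3) 0
  | F7c : FRel K m l (G1 * (A3 * A4 * G1) ^ m) 0
  | F7d : FRel K m l (A2 * (G1 * A3 * A4) ^ m) 0
  | F7e : FRel K m l (A4 * (G1 * A3 * A4) ^ m) 0

/-- The algebra `F(m,λ)`. -/
abbrev FAlg (K : Type*) [Field K] (m : ℕ) (l : K) := RingQuot (FRel K m l)

/-- The canonical projection onto `F(m,λ)`. -/
noncomputable def fq (K : Type*) [Field K] (m : ℕ) (l : K) :
    FFree K →ₐ[K] FAlg K m l := RingQuot.mkAlgHom K (FRel K m l)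

end TwoTiltsF

private lemma pow_mul_swap {M : Type*} [Monoid M] (a b : M) (n : ℕ) :
    (a * b) ^ n * a = a * (b * a) ^ n := by
  induction n with
  | zero => simp
  | succ k ih =>
    rw [pow_succ', mul_assoc, ih, pow_succ', ← mul_assoc, ← mul_assoc, mul_assoc a b a]

open TwoTiltsF in
/-- In the algebra `F(m,λ)`, the derived relation
`(α₂γ₁α₁)^(m-1) α₂γ₁α₃ = 0` follows from the defining relations (F1)-(F7). -/
theorem F_derived_rel_two (K : Type*) [Field K] (m : ℕ) (hm : 2 ≤ m)
    (l : K) (hl : l ≠ 0) :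
    fq K m l ((A2 * G1 * A1) ^ (m - 1) * (A2 * G1 * A3)) = 0 := by
  set f := fq K m l with hf
  set x1 := f A1; set x2 := f A2; set x3 := f A3; set x4 := f A4
  set y1 := f G1; set y2 := f G2
  have h2a : x2 * y1 = x2 * y2 := by
    simpa [x1, x2, x3, x4, y1, y2, f, fq] using RingQuot.mkAlgHom_rel K (FRel.F2a (K := K) (m := m) (l := l))
  have h3b : y2 * x3 = y1 * x3 + l • ((y1 * x3 * x4) ^ (m - 1) * (y1 * x3)) := by
    simpa [x1, x2, x3, x4, y1, y2, f, fq] using RingQuot.mkAlgHom_rel K (FRel.F3b (K := K) (m := m) (l := l))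
  have h6 : y1 * x1 * x2 = y1 * x3 * x4 := by
    simpa [x1, x2, x3, x4, y1, y2, f, fq] using RingQuot.mkAlgHom_rel K (FRel.F6a (K := K) (m := m) (l := l))
  have key : x2 * ((y1 * x3 * x4) ^ (m - 1) * (y1 * x3)) = 0 := by
    have h : x2 * (y2 * x3) = x2 * (y1 * x3) := by
      rw [← mul_assoc, ← h2a, mul_assoc]
    rw [h3b, mul_add, mul_smul_comm] at h
    have h0 : l • (x2 * ((y1 * x3 * x4) ^ (m - 1) * (y1 * x3))) = 0 :=
      add_eq_left.mp h
    exact (smul_eq_zero.mp h0).resolve_left hl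
  have hgoal : f ((A2 * G1 * A1) ^ (m - 1) * (A2 * G1 * A3))
      = (x2 * y1 * x1) ^ (m - 1) * (x2 * y1 * x3) := by
    simp [map_mul, map_pow, x1, x2, x3, y1]
  rw [hgoal]
  have : (x2 * y1 * x1) ^ (m - 1) * (x2 * y1 * x3)
      = ((x2 * (y1 * x1)) ^ (m - 1) * x2) * (y1 * x3) := by
    ring_nf
    rw [mul_assoc, mul_assoc, mul_assoc]
  rw [this, pow_mul_swap, h6, mul_assoc x2, key]
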